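/- Let X ~ MLFD(λ, α, β) with λ > 0, α > 0, β > 1. Then E[X] = E_{α,β−1}(λ)/(α E_{α,β}(λ)) + (1−β)/α. -/

import Mathlib

open Real

noncomputable def mittagLeffler (α β z : ℝ) : ℝ :=
  ∑' k : ℕ, z ^ k / Real.Gamma (α * k + β)

/-- The pmf of the Mittag-Leffler function distribution MLFD(λ, α, β). -/
noncomputable def mlfdPmf (lam α β : ℝ) (k : ℕ) : ℝ :=
  lam ^ k / (Real.Gamma (α * k + β) * mittagLeffler α β lam)


lemma gamma_step {α x : ℝ} (hα : 0 < α) (n : ℕ) (hn : 1 ≤ (n : ℝ) * α) (hx : 2 ≤ x) :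
    x * Real.Gamma x ≤ Real.Gamma (x + n * α) := by
  rw [← Real.Gamma_add_one (by linarith)]
  exact Real.Gamma_strictMonoOn_Ici.monotoneOn (by simp; linarith) (by simp; linarith)
    (by linarith)

lemma ml_summable {lam α β : ℝ} (hlam : 0 < lam) (hα : 0 < α) (hβ : 0 < β) :
    Summable (fun k : ℕ => lam ^ k / Real.Gamma (α * k + β)) := by
  set f : ℕ → ℝ := fun k => lam ^ k / Real.Gamma (α * k + β) with hf
  have hGpos : ∀ k : ℕ, 0 < Real.Gamma (α * k + β) := fun k =>
    Real.Gamma_pos_of_pos (by positivity)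
  have hfpos : ∀ k : ℕ, 0 < f k := fun k => div_pos (pow_pos hlam k) (hGpos k)
  -- choose n with n*α ≥ 1
  obtain ⟨n, hn1, hnα⟩ : ∃ n : ℕ, 1 ≤ n ∧ 1 ≤ (n : ℝ) * α := by
    refine ⟨max 1 ⌈α⁻¹⌉₊, le_max_left _ _, ?_⟩
    have h1 : (α⁻¹ : ℝ) ≤ ⌈α⁻¹⌉₊ := Nat.le_ceil _
    have h2 : (⌈α⁻¹⌉₊ : ℝ) ≤ (max 1 ⌈α⁻¹⌉₊ : ℕ) := by exact_mod_cast Nat.le_max_right 1 _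
    calc (1:ℝ) = α⁻¹ * α := by field_simp
    _ ≤ (max 1 ⌈α⁻¹⌉₊ : ℕ) * α := by nlinarith
  -- choose K with α*K+β ≥ 2 and ≥ 2*lam^n
  obtain ⟨K, hK⟩ : ∃ K : ℕ, max 2 (2 * lam ^ n) ≤ α * K + β := by
    refine ⟨⌈(max 2 (2 * lam ^ n)) / α⌉₊, ?_⟩
    have h1 : (max 2 (2 * lam ^ n)) / α ≤ ⌈(max 2 (2 * lam ^ n)) / α⌉₊ := Nat.le_ceil _
    have := (div_le_iff₀ hα).mp h1
    linarith [this]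
  have hK2 : (2:ℝ) ≤ α * K + β := le_trans (le_max_left _ _) hK
  have hKl : 2 * lam ^ n ≤ α * K + β := le_trans (le_max_right _ _) hK
  -- decay
  have hdecay : ∀ k : ℕ, K ≤ k → f (k + n) ≤ f k / 2 := by
    intro k hk
    have hx2 : (2:ℝ) ≤ α * k + β := by
      have : (K:ℝ) ≤ k := by exact_mod_cast hk
      nlinarith
    have hstep := gamma_step hα n hnα hx2
    have hG2 : 2 * lam ^ n * Real.Gamma (α * k + β) ≤ Real.Gamma (α * (k + n) + β) := by
      have hxK : 2 * lam ^ n ≤ α * k + β := by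
        have : (K:ℝ) ≤ k := by exact_mod_cast hk
        nlinarith
      calc 2 * lam ^ n * Real.Gamma (α * k + β) ≤ (α * k + β) * Real.Gamma (α * k + β) := by
            nlinarith [ (hGpos k) ]
        _ ≤ Real.Gamma ((α * k + β) + n * α) := hstep
        _ = Real.Gamma (α * (k + n) + β) := by ring_nf
    have h1 : f (k + n) = lam ^ k * lam ^ n / Real.Gamma (α * (k + n) + β) := by
      simp only [hf, pow_add]
      push_cast
      ring_nf
    rw [h1]
    rw [div_le_div_iff₀ (by positivity) (by norm_num)]
    calc lam ^ k * lam ^ n * 2 = lam ^ k * (2 * lam ^ n) := by ring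
      _ ≤ lam ^ k * (Real.Gamma (α * (k + n) + β) / Real.Gamma (α * k + β)) := by
          apply mul_le_mul_of_nonneg_left _ (by positivity)
          rw [le_div_iff₀ (hGpos k)]; linarith [hG2]
      _ = f k * Real.Gamma (α * (k + n) + β) := by
          simp only [hf]
          field_simp
  -- split into residue classes mod n
  haveI : NeZero n := ⟨by omega⟩
  rw [← (Nat.divModEquiv n).symm.summable_iff]
  have hfe : ∀ p : ℕ × Fin n, (f ∘ (Nat.divModEquiv n).symm) p = f (p.1 * n + p.2) := by
    intro p; rfl
  refine (summable_prod_of_nonneg ?_).mpr ⟨?_, ?_⟩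
  · intro p; exact le_of_lt (hfpos _)
  · intro m; exact Summable.of_finite
  · apply Summable.congr (f := fun m : ℕ => ∑ j : Fin n, f (m * n + j))
    · apply summable_sum
      intro j _
      apply summable_of_ratio_norm_eventually_le (r := 1/2) (by norm_num)
      filter_upwards [Filter.eventually_ge_atTop K] with m hm
      have h1 : (m + 1) * n + (j:ℕ) = (m * n + j) + n := by ring
      rw [h1]
      have h2 := hdecay (m * n + j) (le_trans hm (by nlinarith [Nat.one_le_iff_ne_zero.mpr (NeZero.ne n)]))
      rw [Real.norm_eq_abs, Real.norm_eq_abs, abs_of_pos (hfpos _), abs_of_pos (hfpos _)]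
      linarith [h2]
    · intro m
      rw [tsum_fintype]
      rfl


lemma ml_pos {lam α β : ℝ} (hlam : 0 < lam) (hα : 0 < α) (hβ : 0 < β) :
    0 < mittagLeffler α β lam := by
  have h0 : 0 < lam ^ (0:ℕ) / Real.Gamma (α * (0:ℕ) + β) := by
    apply div_pos (by norm_num)
    exact Real.Gamma_pos_of_pos (by push_cast; linarith)
  exact Summable.tsum_pos (ml_summable hlam hα hβ)
    (fun k => le_of_lt (div_pos (pow_pos hlam k) (Real.Gamma_pos_of_pos (by positivity)))) 0 h0

/-- Mean of MLFD: `E[X] = E_{α,β−1}(λ)/(α E_{α,β}(λ)) + (1−β)/α` for `β > 1`. -/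
theorem mlfd_mean (lam α β : ℝ) (hlam : 0 < lam) (hα : 0 < α) (hβ : 1 < β) :
    ∑' k : ℕ, (k : ℝ) * mlfdPmf lam α β k
      = mittagLeffler α (β - 1) lam / (α * mittagLeffler α β lam) + (1 - β) / α := by
  have hβ0 : (0:ℝ) < β := by linarith
  have hβ1 : (0:ℝ) < β - 1 := by linarith
  set E := mittagLeffler α β lam with hE
  set E' := mittagLeffler α (β - 1) lam with hE'
  have hEpos : 0 < E := ml_pos hlam hα hβ0
  have hsum1 : Summable (fun k : ℕ => lam ^ k / Real.Gamma (α * k + β)) :=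
    ml_summable hlam hα hβ0
  have hsum2 : Summable (fun k : ℕ => lam ^ k / Real.Gamma (α * k + (β - 1))) :=
    ml_summable hlam hα hβ1
  have hpt : ∀ k : ℕ, (k : ℝ) * mlfdPmf lam α β k
      = (1 / (α * E)) * (lam ^ k / Real.Gamma (α * k + (β - 1)))
        - ((β - 1) / (α * E)) * (lam ^ k / Real.Gamma (α * k + β)) := by
    intro k
    have hx : (0:ℝ) < α * k + β - 1 := by nlinarith [mul_nonneg hα.le (Nat.cast_nonneg k)]
    have hG1 : 0 < Real.Gamma (α * k + (β - 1)) := Real.Gamma_pos_of_pos (by linarith)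
    have hG2 : 0 < Real.Gamma (α * k + β) := Real.Gamma_pos_of_pos (by positivity)
    have hrec : Real.Gamma (α * k + β) = (α * k + β - 1) * Real.Gamma (α * k + (β - 1)) := by
      have := Real.Gamma_add_one (ne_of_gt hx)
      rw [show α * k + β - 1 + 1 = α * k + β by ring] at this
      rw [this, show α * k + β - 1 = α * k + (β - 1) by ring]
    rw [mlfdPmf, ← hE, hrec]
    field_simp [hx.ne']
    ring_nf
    field_simp [(show (0:ℝ) < -1 + (k:ℝ) * α + β by linarith).ne']
    ring
  have hrflE : (∑' k : ℕ, lam ^ k / Real.Gamma (α * k + β)) = E := rfl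
  have hrflE' : (∑' k : ℕ, lam ^ k / Real.Gamma (α * k + (β - 1))) = E' := rfl
  rw [tsum_congr hpt, Summable.tsum_sub (hsum2.mul_left _) (hsum1.mul_left _),
    tsum_mul_left, tsum_mul_left, hrflE, hrflE']
  field_simp
  ring
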